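/- Characterization of the proportional sharing operator (Theorem 3.1(2)): Let Φ be an operator assigning to each f ∈ F_+ a solution Φ(f) : V_+ → ℝ^N such that Σ_{i∈N} Φ_i(f)(v) = v(N) for every v ∈ V_+ (efficiency). Then Φ satisfies (ET) and (EES) and, for every f ∈ F_+, the solution Φ(f) satisfies (f-IER), if and only if for every f ∈ F_+, every v ∈ V_+ and every i ∈ N, Φ_i(f)(v) = (f_i(v)/Σ_{k∈N} f_k(v))·v(N). -/

import Mathlib

/-!
Theorem 3.1(2): characterization of the proportional sharing (PS) operator.
-/

namespace Stmt1

/-- A TU-game on the player set `N`: a function on coalitions vanishing at `∅`. -/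
abbrev Game (N : Type*) := {v : Finset N → ℝ // v ∅ = 0}

variable (N : Type*) [Fintype N] [DecidableEq N]

/-- `V₊`: TU-games whose sum of individual worths is strictly positive. -/
abbrev GamePos := {v : Game N // 0 < ∑ k, v.1 {k}}

/-- `F₊`: positive solutions, i.e. maps on `V₊` whose payoffs always have a
strictly positive sum. -/
abbrev SolPos := {f : GamePos N → N → ℝ // ∀ v, 0 < ∑ k, f v k}

variable {N}

/-- Equal treatment (ET) for an operator on `F₊`. -/
def ET (Φ : SolPos N → GamePos N → N → ℝ) : Prop :=
  ∀ (f : SolPos N) (i j : N), (∀ v, f.1 v i = f.1 v j) → ∀ v, Φ f v i = Φ f v j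

/-- Equality for equal surplus (EES) for an operator on `F₊`. -/
def EES (Φ : SolPos N → GamePos N → N → ℝ) : Prop :=
  ∀ (f f' : SolPos N) (v : GamePos N) (i : N),
    (∑ k, f.1 v k) = (∑ k, f'.1 v k) → f.1 v i = f'.1 v i → Φ f v i = Φ f' v i

/-- The `f`-individualistic property for equal ratio (`f`-IER). -/
def IER (f : SolPos N) (φ : GamePos N → N → ℝ) : Prop :=
  ∀ (v w : GamePos N) (i : N),
    v.1.1 Finset.univ / (∑ k, f.1 v k) = w.1.1 Finset.univ / (∑ k, f.1 w k) →
    f.1 v i = f.1 w i → φ v i = φ w i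

set_option linter.unusedSectionVars false in
lemma singleton_ne_univ (h2 : 2 ≤ Fintype.card N) (k : N) :
    ({k} : Finset N) ≠ Finset.univ := by
  intro h
  have := congrArg Finset.card h
  simp only [Finset.card_singleton, Finset.card_univ] at this
  omega

/-- An auxiliary game with worth `t` for the grand coalition and `c > 0` for
singletons. -/
def mkGame [Nonempty N] (h2 : 2 ≤ Fintype.card N) (t c : ℝ) (hc : 0 < c) :
    GamePos N :=
  ⟨⟨fun A => if A = Finset.univ then t else if A.card = 1 then c else 0, by
      have hemp : (∅ : Finset N) ≠ Finset.univ := fun h =>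
        Finset.univ_nonempty.ne_empty h.symm
      simp [hemp]⟩, by
    have hval : (∑ k : N, (if ({k} : Finset N) = Finset.univ then t
        else if ({k} : Finset N).card = 1 then c else 0)) = ∑ _k : N, c :=
      Finset.sum_congr rfl fun k _ => by
        rw [if_neg (singleton_ne_univ h2 k), if_pos (Finset.card_singleton k)]
    show (0:ℝ) < _
    rw [hval, Finset.sum_const, Finset.card_univ, nsmul_eq_mul]
    exact mul_pos (by exact_mod_cast Fintype.card_pos) hc⟩

lemma mkGame_univ [Nonempty N] (h2 : 2 ≤ Fintype.card N) (t c : ℝ) (hc : 0 < c) :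
    (mkGame h2 t c hc).1.1 Finset.univ = t := by
  have h : (mkGame h2 t c hc).1.1
      = fun A => if A = Finset.univ then t else if A.card = 1 then c else 0 := rfl
  rw [h]
  exact if_pos rfl

lemma mkGame_singleton [Nonempty N] (h2 : 2 ≤ Fintype.card N) (t c : ℝ)
    (hc : 0 < c) (k : N) : (mkGame h2 t c hc).1.1 {k} = c := by
  have h : (mkGame h2 t c hc).1.1
      = fun A => if A = Finset.univ then t else if A.card = 1 then c else 0 := rfl
  rw [h]
  exact (if_neg (singleton_ne_univ h2 k)).trans (if_pos (Finset.card_singleton k))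

lemma exists_game_ne [Nonempty N] (h2 : 2 ≤ Fintype.card N) (w : GamePos N)
    (t : ℝ) : ∃ w' : GamePos N, w' ≠ w ∧ w'.1.1 Finset.univ = t := by
  set w1 := mkGame h2 t 1 one_pos with hw1
  set w2 := mkGame h2 t 2 two_pos with hw2
  have hne : w1 ≠ w2 := by
    intro h
    have := congrArg (fun g : GamePos N => g.1.1 {Classical.arbitrary N}) h
    simp only [hw1, hw2, mkGame_singleton] at this
    norm_num at this
  by_cases h : w1 = w
  · exact ⟨w2, by rw [← h]; exact (Ne.symm hne), mkGame_univ h2 t 2 two_pos⟩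
  · exact ⟨w1, h, mkGame_univ h2 t 1 one_pos⟩

/-- Theorem 3.1(2): an efficient operator on `F₊` satisfies (ET), (EES), and
`Φ(f)` satisfies (`f`-IER) for every `f ∈ F₊`, iff `Φ` is the proportional
sharing operator. -/
theorem ps_operator_characterization [Nonempty N]
    (Φ : SolPos N → GamePos N → N → ℝ)
    (hEff : ∀ (f : SolPos N) (v : GamePos N), ∑ i, Φ f v i = v.1.1 Finset.univ) :
    (ET Φ ∧ EES Φ ∧ ∀ f : SolPos N, IER f (Φ f)) ↔
      (∀ (f : SolPos N) (v : GamePos N) (i : N),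
        Φ f v i = (f.1 v i / ∑ k, f.1 v k) * v.1.1 Finset.univ) := by
  constructor
  · rintro ⟨hET, hEES, hIER⟩ f v i
    classical
    by_cases h2 : 2 ≤ Fintype.card N
    · -- at least two players
      have hn0 : (0:ℝ) < (Fintype.card N : ℝ) := by exact_mod_cast Fintype.card_pos
      -- Step 1: symmetric constant solutions
      have L1 : ∀ (g : SolPos N) (s : ℝ), (∀ v' k, g.1 v' k = s) →
          ∀ (w : GamePos N) (j : N),
            Φ g w j = w.1.1 Finset.univ / (Fintype.card N : ℝ) := by
        intro g s hg w j
        have hall : ∀ k, Φ g w k = Φ g w j := fun k =>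
          hET g k j (fun v' => by rw [hg, hg]) w
        have hsum : ∑ k, Φ g w k = (Fintype.card N : ℝ) * Φ g w j := by
          rw [Finset.sum_congr rfl fun k _ => hall k, Finset.sum_const,
            Finset.card_univ, nsmul_eq_mul]
        have := hEff g w
        rw [hsum] at this
        field_simp
        linarith [this]
      -- Step 2: constant solutions, positive coordinate
      have L2 : ∀ (g : SolPos N) (x : N → ℝ), (∀ v', g.1 v' = x) →
          ∀ (w : GamePos N) (j : N), 0 < x j →
            Φ g w j = x j * (w.1.1 Finset.univ / ∑ k, x k) := by
        intro g x hg w j hxj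
        set s := x j with hs
        have hS : 0 < ∑ k, x k := by have := g.2 w; rwa [hg w] at this
        set S := ∑ k, x k with hSdef
        set t := w.1.1 Finset.univ with ht
        set r := t / S with hr
        have hns : (0:ℝ) < (Fintype.card N : ℝ) * s := mul_pos hn0 hxj
        obtain ⟨w', hw'ne, hw't⟩ :=
          exists_game_ne h2 w (r * ((Fintype.card N : ℝ) * s))
        -- the mixed solution
        set mix : SolPos N :=
          ⟨fun v' => if v' = w then x else fun _ => s, by
            intro v'
            dsimp only
            split
            · exact hS
            · rw [Finset.sum_const, Finset.card_univ, nsmul_eq_mul]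
              exact hns⟩ with hmix
        have hmixw : mix.1 w = x := if_pos rfl
        have hmixw' : mix.1 w' = fun _ => s := if_neg hw'ne
        have hsum' : ∑ k, mix.1 w' k = (Fintype.card N : ℝ) * s := by
          rw [hmixw', Finset.sum_const, Finset.card_univ, nsmul_eq_mul]
        have step1 : Φ g w j = Φ mix w j :=
          hEES g mix w j (by rw [hg w, hmixw]) (by rw [hg w, hmixw])
        have step2 : Φ mix w j = Φ mix w' j := by
          refine hIER mix w w' j ?_ ?_
          · rw [hsum', hw't]
            rw [show ∑ k, mix.1 w k = S by rw [hmixw]]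
            rw [mul_div_assoc, div_self (ne_of_gt hns), mul_one]
          · rw [hmixw, hmixw']
        -- constant-s solution
        set cs : SolPos N := ⟨fun _ _ => s, fun _ => by
          rw [Finset.sum_const, Finset.card_univ, nsmul_eq_mul]; exact hns⟩
          with hcs
        have step3 : Φ mix w' j = Φ cs w' j :=
          hEES mix cs w' j (by rw [hmixw']) (by rw [hmixw'])
        have step4 : Φ cs w' j = r * s := by
          rw [L1 cs s (fun _ _ => rfl) w' j, hw't]
          field_simp
        rw [step1, step2, step3, step4, hs, hr]
        ring
      -- Step 3: constant solutions, arbitrary coordinate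
      have L3 : ∀ (g : SolPos N) (x : N → ℝ), (∀ v', g.1 v' = x) →
          ∀ (w : GamePos N) (j : N),
            Φ g w j = x j * (w.1.1 Finset.univ / ∑ k, x k) := by
        intro g x hg w j
        by_cases hxj : 0 < x j
        · exact L2 g x hg w j hxj
        push_neg at hxj
        have hS : 0 < ∑ k, x k := by have := g.2 w; rwa [hg w] at this
        set S := ∑ k, x k with hSdef
        set t := w.1.1 Finset.univ with ht
        have hn1 : (1:ℝ) ≤ (Fintype.card N : ℝ) - 1 := by
          have : (2:ℝ) ≤ (Fintype.card N : ℝ) := by exact_mod_cast h2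
          linarith
        have hd : (0:ℝ) < (Fintype.card N : ℝ) - 1 := by linarith
        set c := (S - x j) / ((Fintype.card N : ℝ) - 1) with hc
        have hcpos : 0 < c := div_pos (by linarith) hd
        set x' : N → ℝ := fun k => if k = j then x j else c with hx'
        have hx'j : x' j = x j := if_pos rfl
        have hcard : ((Finset.univ.erase j).card : ℝ) = (Fintype.card N : ℝ) - 1 := by
          rw [Finset.card_erase_of_mem (Finset.mem_univ j), Finset.card_univ]
          have h1 : 1 ≤ Fintype.card N := Fintype.card_pos
          push_cast [Nat.cast_sub h1]
          ring
        have hsum' : ∑ k, x' k = S := by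
          rw [← Finset.add_sum_erase _ x' (Finset.mem_univ j), hx'j]
          have : ∑ k ∈ Finset.univ.erase j, x' k
              = ((Finset.univ.erase j).card : ℝ) * c := by
            rw [Finset.sum_congr rfl fun k hk => ?_, Finset.sum_const, nsmul_eq_mul]
            exact if_neg (Finset.ne_of_mem_erase hk)
          rw [this, hcard, hc]
          field_simp
          ring
        set g' : SolPos N := ⟨fun _ => x', fun _ => by rw [hsum']; exact hS⟩
          with hg'
        have step1 : Φ g w j = Φ g' w j :=
          hEES g g' w j (by rw [hg w]; exact hsum'.symm) (by rw [hg w]; exact hx'j.symm)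
        have heff := hEff g' w
        have hrest : ∀ k ∈ Finset.univ.erase j,
            Φ g' w k = c * (t / S) := by
          intro k hk
          have hx'k : x' k = c := if_neg (Finset.ne_of_mem_erase hk)
          have := L2 g' x' (fun _ => rfl) w k (by rw [hx'k]; exact hcpos)
          rw [this, hx'k, hsum']
        have hsplit : ∑ k, Φ g' w k
            = Φ g' w j + ((Fintype.card N : ℝ) - 1) * (c * (t / S)) := by
          rw [← Finset.add_sum_erase _ _ (Finset.mem_univ j),
            Finset.sum_congr rfl hrest, Finset.sum_const, nsmul_eq_mul, hcard]
        rw [hsplit] at heff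
        have hcval : ((Fintype.card N : ℝ) - 1) * c = S - x j := by
          rw [hc]; field_simp
        have : Φ g' w j = t - (S - x j) * (t / S) := by
          rw [← hcval]; linarith [heff]
        rw [step1, this]
        field_simp
        ring
      -- conclude: compare with the constant solution equal to `f.1 v`
      set cf : SolPos N := ⟨fun _ => f.1 v, fun _ => f.2 v⟩ with hcf
      have h1 : Φ f v i = Φ cf v i := hEES f cf v i rfl rfl
      have h2' := L3 cf (f.1 v) (fun _ => rfl) v i
      rw [h1, h2', div_mul_eq_mul_div, mul_div_assoc]
    · -- exactly one player
      have hcard : Fintype.card N = 1 := by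
        have := Fintype.card_pos (α := N); omega
      haveI : Subsingleton N := Fintype.card_le_one_iff_subsingleton.1 (by omega)
      have hsum : ∀ g : N → ℝ, ∑ k, g k = g i := fun g =>
        Finset.sum_eq_single_of_mem i (Finset.mem_univ i)
          (fun b _ hb => absurd (Subsingleton.elim b i) hb)
      have h1 := hEff f v
      rw [hsum] at h1
      have h2' : ∑ k, f.1 v k = f.1 v i := hsum _
      have hpos := f.2 v
      rw [h2'] at hpos
      rw [h1, h2', div_self (ne_of_gt hpos), one_mul]
  · intro hPS
    refine ⟨?_, ?_, ?_⟩
    · intro f i j hij v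
      rw [hPS, hPS, hij v]
    · intro f f' v i hS hi
      rw [hPS, hPS, hS, hi]
    · intro f v w i hr hi
      rw [hPS, hPS, div_mul_eq_mul_div, mul_div_assoc, hr, hi,
        ← mul_div_assoc, ← div_mul_eq_mul_div]

end Stmt1
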